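/- Let n ≥ d ≥ 1 and m ≥ 1 be integers, and let F ∈ {ℝ, ℂ}. If a matrix A ∈ F^{d×n} does not contain more than m pairwise column-disjoint nonsingular d×d submatrices, then at most an (md²/n)-fraction of the d×d submatrices of A are nonsingular. -/

import Mathlib

open scoped Classical in
/-- Let `n ≥ d ≥ 1`, `m ≥ 1`, and let `F ∈ {ℝ, ℂ}` (formalised via `RCLike`).
If a matrix `A ∈ F^{d×n}` does not contain more than `m` pairwise column-disjoint nonsingular
`d×d` submatrices (a `d×d` submatrix is given by a `d`-element set of columns, and it is
nonsingular iff those columns are linearly independent), then at most an `(md²/n)`-fraction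
of the `d×d` submatrices of `A` are nonsingular. -/
theorem stmt1 (F : Type*) [RCLike F] (n d m : ℕ) (hd : 1 ≤ d) (hdn : d ≤ n) (hm : 1 ≤ m)
    (A : Matrix (Fin d) (Fin n) F)
    (h : ∀ 𝒮 : Finset (Finset (Fin n)),
        (∀ s ∈ 𝒮, s.card = d ∧
          LinearIndependent F (fun j : {x // x ∈ s} => fun i : Fin d => A i j.1)) →
        (𝒮 : Set (Finset (Fin n))).Pairwise (fun s t => Disjoint s t) →
        𝒮.card ≤ m) :
    ((((Finset.univ : Finset (Fin n)).powersetCard d).filter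
        (fun s => LinearIndependent F (fun j : {x // x ∈ s} => fun i : Fin d => A i j.1))).card : ℝ)
      ≤ ((m * d ^ 2 : ℝ) / n) * (n.choose d) := by
  classical
  set G := (((Finset.univ : Finset (Fin n)).powersetCard d).filter
      (fun s => LinearIndependent F (fun j : {x // x ∈ s} => fun i : Fin d => A i j.1)))
    with hG
  have hGcard : ∀ s ∈ G, s.card = d := by
    intro s hs
    rw [hG, Finset.mem_filter, Finset.mem_powersetCard] at hs
    exact hs.1.2
  have hGprop : ∀ 𝒮 : Finset (Finset (Fin n)), 𝒮 ⊆ G →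
      (𝒮 : Set (Finset (Fin n))).Pairwise (fun s t => Disjoint s t) → 𝒮.card ≤ m := by
    intro 𝒮 hsub hpw
    refine h 𝒮 (fun s hs => ?_) hpw
    have hs' := hsub hs
    rw [hG, Finset.mem_filter, Finset.mem_powersetCard] at hs'
    exact ⟨hs'.1.2, hs'.2⟩
  set T : Finset (Finset (Finset (Fin n))) := G.powerset.filter
      (fun B => (B : Set (Finset (Fin n))).Pairwise (fun s t => Disjoint s t)) with hTdef
  have hT : ∃ 𝒮 : Finset (Finset (Fin n)), 𝒮 ∈ T ∧
      ∀ 𝒯 : Finset (Finset (Fin n)), 𝒯 ∈ T → Finset.card 𝒯 ≤ Finset.card 𝒮 := by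
    obtain ⟨a, ha, hmax⟩ := Finset.exists_max_image T Finset.card ⟨∅, by simp [hTdef]⟩
    exact ⟨a, ha, hmax⟩
  obtain ⟨𝒮, h𝒮, hmax⟩ := hT
  rw [hTdef] at h𝒮
  rw [Finset.mem_filter, Finset.mem_powerset] at h𝒮
  obtain ⟨h𝒮G, h𝒮pw⟩ := h𝒮
  have h𝒮m : 𝒮.card ≤ m := hGprop 𝒮 h𝒮G h𝒮pw
  set U := 𝒮.biUnion id with hU
  have hUcard : U.card ≤ m * d := by
    calc U.card ≤ ∑ s ∈ 𝒮, (id s).card := Finset.card_biUnion_le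
    _ = ∑ s ∈ 𝒮, d := Finset.sum_congr rfl (fun s hs => hGcard s (h𝒮G hs))
    _ = 𝒮.card * d := by rw [Finset.sum_const, smul_eq_mul]
    _ ≤ m * d := Nat.mul_le_mul_right d h𝒮m
  have hmeet : ∀ s ∈ G, ∃ x ∈ U, x ∈ s := by
    intro s hs
    by_contra hcon
    push_neg at hcon
    have hdisj : ∀ t ∈ 𝒮, Disjoint s t := by
      intro t ht
      refine Finset.disjoint_left.2 fun x hxs hxt => hcon x ?_ hxs
      exact Finset.mem_biUnion.2 ⟨t, ht, hxt⟩
    have hsnot : s ∉ 𝒮 := by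
      intro hmem
      have hse : s = ∅ := by simpa using disjoint_self.mp (hdisj s hmem)
      have hc := hGcard s hs
      rw [hse, Finset.card_empty] at hc
      omega
    have hins : insert s 𝒮 ∈ T := by
      rw [hTdef, Finset.mem_filter, Finset.mem_powerset]
      refine ⟨Finset.insert_subset hs h𝒮G, ?_⟩
      rw [Finset.coe_insert]
      haveI : Std.Symm (fun s t : Finset (Fin n) => Disjoint s t) := ⟨fun a b hab => hab.symm⟩
      rw [Set.pairwise_insert_of_symm]
      exact ⟨h𝒮pw, fun t ht _ => hdisj t ht⟩
    have := hmax _ hins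
    rw [Finset.card_insert_of_notMem hsnot] at this
    omega
  have hsubU : G ⊆ U.biUnion
      (fun x => ((Finset.univ : Finset (Fin n)).powersetCard d).filter (fun s => x ∈ s)) := by
    intro s hs
    obtain ⟨x, hxU, hxs⟩ := hmeet s hs
    refine Finset.mem_biUnion.2 ⟨x, hxU, ?_⟩
    rw [Finset.mem_filter]
    refine ⟨?_, hxs⟩
    rw [hG, Finset.mem_filter] at hs
    exact hs.1
  have hcount : ∀ x : Fin n,
      (((Finset.univ : Finset (Fin n)).powersetCard d).filter (fun s => x ∈ s)).card
        ≤ (n-1).choose (d-1) := by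
    intro x
    have hpc : (((Finset.univ : Finset (Fin n)).erase x).powersetCard (d-1)).card
        = (n-1).choose (d-1) := by
      rw [Finset.card_powersetCard, Finset.card_erase_of_mem (Finset.mem_univ x),
        Finset.card_univ, Fintype.card_fin]
    rw [← hpc]
    apply Finset.card_le_card_of_injOn (fun s => s.erase x)
    · intro s hs
      rw [Finset.mem_coe, Finset.mem_filter, Finset.mem_powersetCard] at hs
      rw [Finset.mem_coe, Finset.mem_powersetCard]
      constructor
      · intro y hy
        rw [Finset.mem_erase] at hy ⊢
        exact ⟨hy.1, Finset.mem_univ y⟩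
      · rw [Finset.card_erase_of_mem hs.2, hs.1.2]
    · intro s hsm t htm hst
      rw [Finset.mem_coe, Finset.mem_filter] at hsm htm
      have h2 : insert x (s.erase x) = insert x (t.erase x) := by
        simp only at hst; rw [hst]
      rwa [Finset.insert_erase hsm.2, Finset.insert_erase htm.2] at h2
  have hGle : G.card ≤ m * d * (n-1).choose (d-1) := by
    calc G.card ≤ (U.biUnion
        (fun x => ((Finset.univ : Finset (Fin n)).powersetCard d).filter (fun s => x ∈ s))).card :=
        Finset.card_le_card hsubU
    _ ≤ ∑ x ∈ U, (((Finset.univ : Finset (Fin n)).powersetCard d).filter (fun s => x ∈ s)).card :=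
        Finset.card_biUnion_le
    _ ≤ ∑ x ∈ U, (n-1).choose (d-1) := Finset.sum_le_sum (fun x _ => hcount x)
    _ = U.card * (n-1).choose (d-1) := by rw [Finset.sum_const, smul_eq_mul]
    _ ≤ m * d * (n-1).choose (d-1) := Nat.mul_le_mul_right _ hUcard
  have hn : (0:ℝ) < n := by
    have : 1 ≤ n := le_trans hd hdn
    exact_mod_cast Nat.lt_of_lt_of_le Nat.zero_lt_one this
  have key : (n : ℝ) * ((n-1).choose (d-1)) = (n.choose d) * d := by
    have h1 : n - 1 + 1 = n := Nat.succ_pred_eq_of_pos (lt_of_lt_of_le hd hdn)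
    have h2 : d - 1 + 1 = d := Nat.succ_pred_eq_of_pos hd
    have hh := Nat.add_one_mul_choose_eq (n-1) (d-1)
    rw [h1, h2] at hh
    exact_mod_cast hh
  calc (G.card : ℝ) ≤ ((m * d * (n-1).choose (d-1) : ℕ) : ℝ) := by exact_mod_cast hGle
  _ = (m : ℝ) * d * ((n-1).choose (d-1)) := by push_cast; ring
  _ = ((m * d ^ 2 : ℝ) / n) * (n.choose d) := by
      field_simp
      linear_combination key
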